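/- Let G ≤ Sym(Ω) be such that the set π(G) of orbit partitions of elements of G is totally ordered by refinement. Then no element of G has an infinite cycle, and the permutation group induced by G on each of its orbits is regular. -/
import Mathlib


/-- The orbit partition of a permutation `g`, as a setoid on `Ω`. -/
def piPart {Ω : Type*} (g : Equiv.Perm Ω) : Setoid Ω :=
  MulAction.orbitRel (Subgroup.zpowers g) Ω

/-- The set of orbit partitions of elements of a permutation group `G`. -/
def piSet {Ω : Type*} (G : Subgroup (Equiv.Perm Ω)) : Set (Setoid Ω) :=
  {P | ∃ g ∈ G, piPart g = P}

/-- `G` is join-coherent if its set of orbit partitions is closed under joins. -/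
def JoinCoherent {Ω : Type*} (G : Subgroup (Equiv.Perm Ω)) : Prop :=
  ∀ P ∈ piSet G, ∀ Q ∈ piSet G, P ⊔ Q ∈ piSet G

/-- `G` is meet-coherent if its set of orbit partitions is closed under meets. -/
def MeetCoherent {Ω : Type*} (G : Subgroup (Equiv.Perm Ω)) : Prop :=
  ∀ P ∈ piSet G, ∀ Q ∈ piSet G, P ⊓ Q ∈ piSet G

lemma piPart_rel {Ω : Type*} (g : Equiv.Perm Ω) (a b : Ω) :
    (piPart g).r a b ↔ ∃ n : ℤ, (g ^ n) b = a := by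
  show a ∈ MulAction.orbit (Subgroup.zpowers g) b ↔ _
  rw [MulAction.mem_orbit_iff]
  constructor
  · rintro ⟨⟨u, m, rfl⟩, h⟩
    exact ⟨m, h⟩
  · rintro ⟨m, h⟩
    exact ⟨⟨g ^ m, m, rfl⟩, h⟩

lemma zpow_sub_fix {Ω : Type*} (g : Equiv.Perm Ω) (x : Ω) (a b : ℤ)
    (h : (g ^ a) x = (g ^ b) x) : (g ^ (a - b)) x = x := by
  have h2 : ((g ^ (-b)) * (g ^ a)) x = ((g ^ (-b)) * (g ^ b)) x := by
    simp [Equiv.Perm.mul_apply, h]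
  rwa [← zpow_add, ← zpow_add, neg_add_cancel, zpow_zero, add_comm, ← sub_eq_add_neg,
    Equiv.Perm.one_apply] at h2

lemma chain_comp {Ω : Type*} {G : Subgroup (Equiv.Perm Ω)}
    (hchain : IsChain (· ≤ ·) (piSet G)) {g₁ g₂ : Equiv.Perm Ω}
    (h₁ : g₁ ∈ G) (h₂ : g₂ ∈ G) :
    piPart g₁ ≤ piPart g₂ ∨ piPart g₂ ≤ piPart g₁ := by
  by_cases he : piPart g₁ = piPart g₂
  · exact Or.inl (le_of_eq he)
  · exact hchain ⟨g₁, h₁, rfl⟩ ⟨g₂, h₂, rfl⟩ he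

lemma part_one {Ω : Type*} (G : Subgroup (Equiv.Perm Ω))
    (hchain : IsChain (· ≤ ·) (piSet G)) :
    ∀ g ∈ G, ∀ x : Ω, ∃ n : ℕ, 0 < n ∧ (g ^ n) x = x := by
  intro g hg x
  by_contra hc
  push_neg at hc
  have hzero : ∀ m : ℤ, (g ^ m) x = x → m = 0 := by
    intro m hm
    by_contra hm0
    have habs : ∀ k : ℤ, 0 < k → (g ^ k) x ≠ x := by
      intro k hk
      have hk' : (0:ℕ) < k.toNat := by omega
      have hek : (g ^ k) = g ^ k.toNat := by rw [← zpow_natCast]; congr 1; omega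
      rw [hek]
      exact hc _ hk'
    rcases lt_or_gt_of_ne hm0 with hlt | hgt
    · have hneg : (g ^ (-m)) x = x := by
        have := zpow_sub_fix g x 0 m (by simpa using hm.symm)
        simpa using this
      exact habs (-m) (by omega) hneg
    · exact habs m hgt hm
  have e2 : (g ^ (2:ℤ)) = g ^ (2:ℕ) := by rw [show ((2:ℤ)) = ((2:ℕ):ℤ) by norm_num, zpow_natCast]
  have e3 : (g ^ (3:ℤ)) = g ^ (3:ℕ) := by rw [show ((3:ℤ)) = ((3:ℕ):ℤ) by norm_num, zpow_natCast]
  rcases chain_comp hchain (pow_mem hg 2) (pow_mem hg 3) with hle | hle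
  · have hr : (piPart (g ^ 2)).r ((g ^ 2) x) x :=
      (piPart_rel _ _ _).2 ⟨1, by simp⟩
    obtain ⟨n, hn⟩ := (piPart_rel _ _ _).1 (hle hr)
    have hn' : (g ^ ((3:ℤ) * n)) x = (g ^ (2:ℤ)) x := by
      rw [zpow_mul, e3, e2]; exact hn
    have := hzero _ (zpow_sub_fix g x _ _ hn')
    omega
  · have hr : (piPart (g ^ 3)).r ((g ^ 3) x) x :=
      (piPart_rel _ _ _).2 ⟨1, by simp⟩
    obtain ⟨n, hn⟩ := (piPart_rel _ _ _).1 (hle hr)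
    have hn' : (g ^ ((2:ℤ) * n)) x = (g ^ (3:ℤ)) x := by
      rw [zpow_mul, e2, e3]; exact hn
    have := hzero _ (zpow_sub_fix g x _ _ hn')
    omega

/-- If the set of orbit partitions of elements of `G` is a chain under refinement, then no
element of `G` has an infinite cycle, and the permutation group induced by `G` on each of
its orbits is regular (transitivity being automatic, every element of `G` fixing a point
of an orbit fixes that orbit pointwise). -/
theorem chain_no_infinite_cycle_and_regular_orbits {Ω : Type*}
    (G : Subgroup (Equiv.Perm Ω)) (hchain : IsChain (· ≤ ·) (piSet G)) :
    (∀ g ∈ G, ∀ x : Ω, ∃ n : ℕ, 0 < n ∧ (g ^ n) x = x) ∧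
    (∀ g ∈ G, ∀ x y : Ω, (∃ h ∈ G, h x = y) → g x = x → g y = y) := by
  refine ⟨part_one G hchain, ?_⟩
  rintro g hg x y ⟨h, hh, hhx⟩ hgx
  by_contra hgy
  obtain ⟨a, ha0, ha⟩ := part_one G hchain h hh y
  obtain ⟨b, hb0, hb⟩ := part_one G hchain h hh (g y)
  set s : ℕ → Equiv.Perm Ω := fun k => h ^ k * g * (h ^ k)⁻¹ with hs
  have hsmem : ∀ k, s k ∈ G := fun k =>
    mul_mem (mul_mem (pow_mem hh k) hg) (inv_mem (pow_mem hh k))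
  have hsfix : ∀ k, (s k) ((h ^ k) x) = (h ^ k) x := by
    intro k
    simp [hs, Equiv.Perm.mul_apply, hgx]
  have hsmove : ∀ k, (s k) ((h ^ k) y) = (h ^ k) (g y) := by
    intro k
    simp [hs, Equiv.Perm.mul_apply]
  have hlink : ∀ k, (h ^ (k + 1)) x = (h ^ k) y := by
    intro k
    rw [pow_succ, Equiv.Perm.mul_apply, hhx]
  have step : ∀ k, piPart (s (k + 1)) ≤ piPart (s k) := by
    intro k
    rcases chain_comp hchain (hsmem k) (hsmem (k + 1)) with hle | hle
    · exfalso
      have hr : (piPart (s k)).r ((s k) ((h ^ k) y)) ((h ^ k) y) :=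
        (piPart_rel _ _ _).2 ⟨1, by simp⟩
      obtain ⟨n, hn⟩ := (piPart_rel _ _ _).1 (hle hr)
      have hfix : (s (k + 1)) ((h ^ k) y) = (h ^ k) y := by
        rw [← hlink k]; exact hsfix (k + 1)
      rw [Equiv.Perm.zpow_apply_eq_self_of_apply_eq_self hfix, hsmove] at hn
      exact hgy (((h : Equiv.Perm Ω) ^ k).injective hn).symm
    · exact hle
  have desc : ∀ k : ℕ, piPart (s (k + 1)) ≤ piPart (s 1) := by
    intro k
    induction k with
    | zero => exact le_refl _
    | succ k ih => exact (step (k + 1)).trans ih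
  have hmy : (h ^ (a * b)) y = y := by
    rw [pow_mul]
    exact Equiv.Perm.pow_apply_eq_self_of_apply_eq_self ha b
  have hmgy : (h ^ (a * b)) (g y) = g y := by
    rw [mul_comm, pow_mul]
    exact Equiv.Perm.pow_apply_eq_self_of_apply_eq_self hb a
  have hminv : ((h ^ (a * b))⁻¹) y = y := by
    conv_lhs => rw [← hmy]
    simp
  have hsm : (s (a * b)) y = g y := by
    simp [hs, Equiv.Perm.mul_apply, hminv, hmgy]
  have hab1 : a * b = (a * b - 1) + 1 := by
    have : 1 ≤ a * b := Nat.one_le_iff_ne_zero.2 (by positivity)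
    omega
  have hfin : piPart (s (a * b)) ≤ piPart (s 1) := by
    rw [hab1]; exact desc (a * b - 1)
  have hr : (piPart (s (a * b))).r (g y) y := by
    rw [piPart_rel]
    exact ⟨1, by simpa using hsm⟩
  obtain ⟨n, hn⟩ := (piPart_rel _ _ _).1 (hfin hr)
  have hfix1 : (s 1) y = y := by
    have hinv : (h : Equiv.Perm Ω)⁻¹ y = x := by rw [← hhx]; simp
    simp [hs, Equiv.Perm.mul_apply, hinv, hgx, hhx]
  rw [Equiv.Perm.zpow_apply_eq_self_of_apply_eq_self hfix1] at hn
  exact hgy hn.symm
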